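/- Let S ⊂ ℤ² be a finite set, η : S → ℝ coefficients, and δ > 0, such that for every ω ∈ ℝ² the trigonometric sum g(ω) = Σ_{h∈S} η(h)·exp(i(ω₁h₁ + ω₂h₂)) is real-valued and satisfies g(ω) ≥ δ, and set f(ω) = 1/g(ω). For h ∈ ℤ² define K(h) = ∫_{[0,2π]²} f(ω)·exp(i(ω₁h₁ + ω₂h₂)) dω, and for positive integers n₁, n₂, J define the Riemann-sum approximation K(h; J, n) = (4π²/(n₁n₂J²)) · Σ_{j₁=0}^{n₁J−1} Σ_{j₂=0}^{n₂J−1} f(2πj₁/(n₁J), 2πj₂/(n₂J)) · exp(i(2πj₁h₁/(n₁J) + 2πj₂h₂/(n₂J))). Then for every natural number p ≥ 1 there exists a constant C_p < ∞, depending only on f and p, such that for all positive integers n₁ ≤ n₂, all integers J ≥ 2, and all h ∈ ℤ² with |h₁| ≤ n₁ and |h₂| ≤ n₂, we have |K(h) − K(h; J, n)| ≤ C_p / (n₁J)^p. (Paper's Theorem 1: the FFT-based covariance computation for a stationary Markov random field with bounded spectral density converges faster than any polynomial rate.) -/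

import Mathlib

open Real MeasureTheory

noncomputable def efun (k : ℤ × ℤ) (ω : ℝ × ℝ) : ℂ :=
  Complex.exp (Complex.I * k.1 * (ω.1:ℂ)) * Complex.exp (Complex.I * k.2 * (ω.2:ℂ))

lemma efun_cont (k : ℤ × ℤ) : Continuous (efun k) := by
  unfold efun; fun_prop

lemma efun_norm (k : ℤ × ℤ) (ω : ℝ × ℝ) : ‖efun k ω‖ = 1 := by
  unfold efun
  rw [norm_mul, Complex.norm_exp, Complex.norm_exp]
  have h1 : (Complex.I * k.1 * (ω.1:ℂ)).re = 0 := by simp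
  have h2 : (Complex.I * k.2 * (ω.2:ℂ)).re = 0 := by simp
  rw [h1, h2]; simp

lemma efun_mul (k m : ℤ × ℤ) (ω : ℝ × ℝ) : efun k ω * efun m ω = efun (k + m) ω := by
  unfold efun
  rw [mul_mul_mul_comm, ← Complex.exp_add, ← Complex.exp_add]
  rw [Prod.fst_add, Prod.snd_add]
  congr 2 <;> (push_cast; ring)

lemma disc1 (N : ℕ) (hN : 0 < N) (k : ℤ) :
    ∑ j ∈ Finset.range N, Complex.exp (Complex.I * k * ((2*π*j/N : ℝ) : ℂ)) =
      if (N:ℤ) ∣ k then (N:ℂ) else 0 := by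
  have hNC : (N:ℂ) ≠ 0 := by exact_mod_cast hN.ne'
  have hterm : ∀ j ∈ Finset.range N, Complex.exp (Complex.I * k * ((2*π*j/N : ℝ) : ℂ)) =
      (Complex.exp (Complex.I * k * ((2*π/N : ℝ) : ℂ)))^j := by
    intro j _
    rw [← Complex.exp_nat_mul]
    congr 1
    push_cast
    field_simp
  rw [Finset.sum_congr rfl hterm]
  set ζ := Complex.exp (Complex.I * k * ((2*π/N : ℝ) : ℂ)) with hζ
  have hz : Complex.I * k * ((2*π/N : ℝ) : ℂ) = ((k:ℂ)/N) * (2*π*Complex.I) := by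
    push_cast; ring
  have h2 : (2*(π:ℂ)*Complex.I) ≠ 0 := by
    simp [Real.pi_ne_zero, Complex.I_ne_zero]
  have hζ1 : ζ = 1 ↔ (N:ℤ) ∣ k := by
    rw [hζ, hz, Complex.exp_eq_one_iff]
    constructor
    · rintro ⟨n, hn⟩
      have h3 : (k:ℂ)/N = n := mul_right_cancel₀ h2 hn
      refine ⟨n, ?_⟩
      have : (k:ℂ) = N * n := by rw [div_eq_iff hNC] at h3; rw [h3]; ring
      exact_mod_cast this
    · rintro ⟨n, hn⟩
      refine ⟨n, ?_⟩
      rw [hn]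
      push_cast
      field_simp
  by_cases hdvd : (N:ℤ) ∣ k
  · simp [hζ1.mpr hdvd, hdvd]
  · have hζne : ζ ≠ 1 := fun h => hdvd (hζ1.mp h)
    rw [if_neg hdvd, geom_sum_eq hζne]
    have : ζ^N = 1 := by
      rw [hζ, ← Complex.exp_nat_mul, hz, ← mul_assoc, mul_div_cancel₀ _ hNC]
      exact Complex.exp_int_mul_two_pi_mul_I k
    simp [this]

lemma int1 (k : ℤ) (hk : k ≠ 0) :
    ∫ t in Set.Icc (0:ℝ) (2*π), Complex.exp (Complex.I * k * t) = 0 := by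
  rw [MeasureTheory.integral_Icc_eq_integral_Ioc, ← intervalIntegral.integral_of_le (by positivity)]
  have hc : (Complex.I * k : ℂ) ≠ 0 := by
    simp [Complex.I_ne_zero, Complex.ext_iff, hk]
  rw [show (fun t : ℝ => Complex.exp (Complex.I * k * t)) = fun t : ℝ => Complex.exp ((Complex.I * k) * t) by rfl]
  rw [integral_exp_mul_complex hc]
  have : Complex.exp (Complex.I * k * (2*π:ℝ)) = 1 := by
    rw [show (Complex.I * k * (2*π:ℝ) : ℂ) = k * (2*π*Complex.I) by push_cast; ring]
    exact Complex.exp_int_mul_two_pi_mul_I k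
  rw [show ((2*π:ℝ):ℂ) = (2*↑π:ℂ) by push_cast; ring] at this
  simp [this]

lemma int1' (k : ℤ) :
    ∫ t in Set.Icc (0:ℝ) (2*π), Complex.exp (Complex.I * k * t)
      = if k = 0 then (2*π:ℂ) else 0 := by
  by_cases hk : k = 0
  · subst hk
    simp only [Int.cast_zero, mul_zero, zero_mul, Complex.exp_zero, if_true]
    rw [MeasureTheory.setIntegral_const]
    simp only [measureReal_def, Real.volume_Icc, sub_zero, ENNReal.toReal_ofReal (by positivity : (0:ℝ) ≤ 2*π)]
    simp [Complex.real_smul]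
  · rw [if_neg hk]; exact int1 k hk

lemma intE (k : ℤ × ℤ) :
    ∫ ω in Set.Icc (0:ℝ) (2*π) ×ˢ Set.Icc (0:ℝ) (2*π), efun k ω =
      (if k.1 = 0 then (2*π:ℂ) else 0) * (if k.2 = 0 then (2*π:ℂ) else 0) := by
  have h := MeasureTheory.setIntegral_prod_mul (μ := (volume : Measure ℝ))
    (ν := (volume : Measure ℝ)) (fun t : ℝ => Complex.exp (Complex.I * k.1 * t))
    (fun t : ℝ => Complex.exp (Complex.I * k.2 * t))
    (Set.Icc (0:ℝ) (2*π)) (Set.Icc (0:ℝ) (2*π))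
  rw [Measure.volume_eq_prod]
  exact h.trans (by rw [int1' k.1, int1' k.2])

noncomputable def Lf (N₁ N₂ : ℕ) (φ : ℝ × ℝ → ℂ) : ℂ :=
  ((N₁:ℂ)*(N₂:ℂ))⁻¹ * (∑ j₁ ∈ Finset.range N₁, ∑ j₂ ∈ Finset.range N₂,
      φ (2*π*j₁/N₁, 2*π*j₂/N₂))
  - ((4:ℂ)*(π:ℂ)^2)⁻¹ * ∫ ω in Set.Icc (0:ℝ) (2*π) ×ˢ Set.Icc (0:ℝ) (2*π), φ ω

lemma dvd_iff_zero {N : ℕ} {k : ℤ} (hk : |k| < (N:ℤ)) : ((N:ℤ) ∣ k) ↔ k = 0 := by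
  constructor
  · intro hd
    by_contra h0
    exact absurd (Int.le_of_dvd (abs_pos.mpr h0) ((dvd_abs _ _).mpr hd)) (not_le.mpr hk)
  · rintro rfl; exact dvd_zero _

lemma Lf_sub (N₁ N₂ : ℕ) (φ ψ : ℝ × ℝ → ℂ) (hφ : Continuous φ) (hψ : Continuous ψ) :
    Lf N₁ N₂ (fun ω => φ ω - ψ ω) = Lf N₁ N₂ φ - Lf N₁ N₂ ψ := by
  unfold Lf
  have hcomp : IsCompact (Set.Icc (0:ℝ) (2*π) ×ˢ Set.Icc (0:ℝ) (2*π)) :=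
    isCompact_Icc.prod isCompact_Icc
  rw [MeasureTheory.integral_sub (hφ.continuousOn.integrableOn_compact hcomp)
    (hψ.continuousOn.integrableOn_compact hcomp)]
  simp only [Finset.sum_sub_distrib]
  ring

lemma Lf_add (N₁ N₂ : ℕ) (φ ψ : ℝ × ℝ → ℂ) (hφ : Continuous φ) (hψ : Continuous ψ) :
    Lf N₁ N₂ (fun ω => φ ω + ψ ω) = Lf N₁ N₂ φ + Lf N₁ N₂ ψ := by
  unfold Lf
  have hcomp : IsCompact (Set.Icc (0:ℝ) (2*π) ×ˢ Set.Icc (0:ℝ) (2*π)) :=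
    isCompact_Icc.prod isCompact_Icc
  rw [MeasureTheory.integral_add (hφ.continuousOn.integrableOn_compact hcomp)
    (hψ.continuousOn.integrableOn_compact hcomp)]
  simp only [Finset.sum_add_distrib]
  ring

lemma Lf_const_mul (N₁ N₂ : ℕ) (c : ℂ) (φ : ℝ × ℝ → ℂ) :
    Lf N₁ N₂ (fun ω => c * φ ω) = c * Lf N₁ N₂ φ := by
  unfold Lf
  rw [MeasureTheory.integral_const_mul]
  simp only [← Finset.mul_sum]
  ring

lemma Lf_sum (N₁ N₂ : ℕ) {ι : Type*} (s : Finset ι) (ψ : ι → ℝ × ℝ → ℂ)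
    (h : ∀ i ∈ s, Continuous (ψ i)) :
    Lf N₁ N₂ (fun ω => ∑ i ∈ s, ψ i ω) = ∑ i ∈ s, Lf N₁ N₂ (ψ i) := by
  unfold Lf
  have hcomp : IsCompact (Set.Icc (0:ℝ) (2*π) ×ˢ Set.Icc (0:ℝ) (2*π)) :=
    isCompact_Icc.prod isCompact_Icc
  rw [MeasureTheory.integral_finset_sum s
    (fun i hi => ((h i hi).continuousOn.integrableOn_compact hcomp))]
  rw [Finset.sum_congr rfl fun j₁ _ => Finset.sum_comm, Finset.sum_comm,
    Finset.mul_sum, Finset.mul_sum, ← Finset.sum_sub_distrib]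

lemma Lf_exp (N₁ N₂ : ℕ) (h1 : 0 < N₁) (h2 : 0 < N₂) (k : ℤ × ℤ)
    (hk1 : |k.1| < (N₁:ℤ)) (hk2 : |k.2| < (N₂:ℤ)) :
    Lf N₁ N₂ (efun k) = 0 := by
  unfold Lf
  have hd : (∑ j₁ ∈ Finset.range N₁, ∑ j₂ ∈ Finset.range N₂,
      efun k (2*π*j₁/N₁, 2*π*j₂/N₂)) =
      (∑ j₁ ∈ Finset.range N₁, Complex.exp (Complex.I * k.1 * ((2*π*j₁/N₁ : ℝ) : ℂ))) *
      (∑ j₂ ∈ Finset.range N₂, Complex.exp (Complex.I * k.2 * ((2*π*j₂/N₂ : ℝ) : ℂ))) := by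
    rw [Finset.sum_mul_sum]
    rfl
  rw [hd, intE, disc1 N₁ h1 k.1, disc1 N₂ h2 k.2]
  simp only [dvd_iff_zero hk1, dvd_iff_zero hk2]
  have hπ : (π:ℂ) ≠ 0 := by exact_mod_cast Real.pi_ne_zero
  have hN1 : (N₁:ℂ) ≠ 0 := by exact_mod_cast h1.ne'
  have hN2 : (N₂:ℂ) ≠ 0 := by exact_mod_cast h2.ne'
  by_cases e1 : k.1 = 0 <;> by_cases e2 : k.2 = 0 <;>
    simp [e1, e2] <;> field_simp <;> ring

lemma Lf_norm_le (N₁ N₂ : ℕ) (h1 : 0 < N₁) (h2 : 0 < N₂) (φ : ℝ × ℝ → ℂ) (B : ℝ)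
    (hbound : ∀ ω : ℝ × ℝ, ‖φ ω‖ ≤ B) : ‖Lf N₁ N₂ φ‖ ≤ 2 * B := by
  have hB : 0 ≤ B := le_trans (norm_nonneg _) (hbound 0)
  unfold Lf
  apply (norm_sub_le _ _).trans
  have hd : ‖((N₁:ℂ)*(N₂:ℂ))⁻¹ * (∑ j₁ ∈ Finset.range N₁, ∑ j₂ ∈ Finset.range N₂,
      φ (2*π*j₁/N₁, 2*π*j₂/N₂))‖ ≤ B := by
    rw [norm_mul]
    have hsum : ‖(∑ j₁ ∈ Finset.range N₁, ∑ j₂ ∈ Finset.range N₂,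
        φ (2*π*j₁/N₁, 2*π*j₂/N₂))‖ ≤ (N₁:ℝ) * (N₂:ℝ) * B := by
      apply (norm_sum_le _ _).trans
      have : ∀ j₁ ∈ Finset.range N₁, ‖∑ j₂ ∈ Finset.range N₂,
          φ (2*π*j₁/N₁, 2*π*j₂/N₂)‖ ≤ (N₂:ℝ) * B := by
        intro j₁ _
        apply (norm_sum_le _ _).trans
        apply le_trans (Finset.sum_le_sum (fun j₂ _ => hbound _))
        rw [Finset.sum_const, Finset.card_range, nsmul_eq_mul]
      apply le_trans (Finset.sum_le_sum this)
      rw [Finset.sum_const, Finset.card_range, nsmul_eq_mul]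
      ring_nf; rfl
    have hnn : ‖((N₁:ℂ)*(N₂:ℂ))⁻¹‖ = ((N₁:ℝ)*(N₂:ℝ))⁻¹ := by
      rw [norm_inv, norm_mul, Complex.norm_natCast, Complex.norm_natCast]
    rw [hnn]
    rw [inv_mul_le_iff₀ (by positivity)]
    exact hsum.trans (le_of_eq (by ring))
  have hi : ‖((4:ℂ)*(π:ℂ)^2)⁻¹ * ∫ ω in Set.Icc (0:ℝ) (2*π) ×ˢ Set.Icc (0:ℝ) (2*π), φ ω‖
      ≤ B := by
    rw [norm_mul]
    have hvol : volume (Set.Icc (0:ℝ) (2*π) ×ˢ Set.Icc (0:ℝ) (2*π)) =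
        ENNReal.ofReal (2*π) * ENNReal.ofReal (2*π) := by
      rw [Measure.volume_eq_prod, Measure.prod_prod, Real.volume_Icc]
      simp
    have hfin : volume (Set.Icc (0:ℝ) (2*π) ×ˢ Set.Icc (0:ℝ) (2*π)) < ⊤ := by
      rw [hvol]; exact ENNReal.mul_lt_top ENNReal.ofReal_lt_top ENNReal.ofReal_lt_top
    have hint := norm_setIntegral_le_of_norm_le_const hfin
      (fun ω _ => hbound ω)
    have hto : (volume (Set.Icc (0:ℝ) (2*π) ×ˢ Set.Icc (0:ℝ) (2*π))).toReal = 4*π^2 := by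
      rw [hvol, ENNReal.toReal_mul, ENNReal.toReal_ofReal (by positivity)]
      ring
    rw [measureReal_def, hto] at hint
    have hn4 : ‖((4:ℂ)*(π:ℂ)^2)⁻¹‖ = (4*π^2)⁻¹ := by
      rw [norm_inv, norm_mul]
      simp [Complex.norm_real, abs_of_nonneg Real.pi_nonneg]
    rw [hn4, inv_mul_le_iff₀ (by positivity)]
    exact hint.trans (le_of_eq (by ring))
  linarith

lemma vanish (S : Finset (ℤ × ℤ)) (η : ℤ × ℤ → ℝ) (g : ℝ × ℝ → ℂ)
    (hg' : ∀ ω, g ω = ∑ h ∈ S, (η h : ℂ) * efun h ω)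
    (M : ℂ) (hM : M ≠ 0) (d : ℕ)
    (hd : ∀ h ∈ S, |h.1| ≤ (d:ℤ) ∧ |h.2| ≤ (d:ℤ))
    (N₁ N₂ : ℕ) (h1 : 0 < N₁) (h2 : 0 < N₂) :
    ∀ (r : ℕ) (m : ℤ × ℤ), |m.1| + r*(d:ℤ) < (N₁:ℤ) → |m.2| + r*(d:ℤ) < (N₂:ℤ) →
      Lf N₁ N₂ (fun ω => (1 - g ω / M)^r * efun m ω) = 0 := by
  have hgc : Continuous g := by
    rw [funext hg']
    exact continuous_finset_sum _ (fun h _ => (continuous_const.mul (efun_cont h)))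
  have hucont : ∀ r : ℕ, Continuous (fun ω => (1 - g ω / M)^r) := by
    intro r; fun_prop
  intro r
  induction r with
  | zero =>
    intro m hm1 hm2
    simp only [pow_zero, one_mul]
    exact Lf_exp N₁ N₂ h1 h2 m (by simpa using hm1) (by simpa using hm2)
  | succ r ih =>
    intro m hm1 hm2
    have hstep : ∀ ω : ℝ × ℝ, (1 - g ω / M)^(r+1) * efun m ω =
        (1 - g ω / M)^r * efun m ω -
          ∑ h ∈ S, ((η h : ℂ) / M) * ((1 - g ω / M)^r * efun (h + m) ω) := by
      intro ω
      have hgm : g ω * efun m ω = ∑ h ∈ S, (η h : ℂ) * efun (h + m) ω := by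
        rw [hg' ω, Finset.sum_mul]
        exact Finset.sum_congr rfl fun h _ => by rw [mul_assoc, efun_mul]
      have expand : (1 - g ω / M)^(r+1) * efun m ω =
          (1 - g ω / M)^r * efun m ω - M⁻¹ * ((1 - g ω / M)^r * (g ω * efun m ω)) := by
        rw [pow_succ]; field_simp
      rw [expand, hgm, Finset.mul_sum, Finset.mul_sum]
      congr 1
      apply Finset.sum_congr rfl
      intro h _
      ring
    rw [funext hstep]
    have hcont1 : Continuous (fun ω => (1 - g ω / M)^r * efun m ω) :=
      (hucont r).mul (efun_cont m)
    have hcont2 : Continuous (fun ω => ∑ h ∈ S, ((η h : ℂ) / M) *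
        ((1 - g ω / M)^r * efun (h + m) ω)) := by
      apply continuous_finset_sum
      intro h _
      exact continuous_const.mul ((hucont r).mul (efun_cont _))
    rw [Lf_sub N₁ N₂ _ _ hcont1 hcont2]
    have hz1 : Lf N₁ N₂ (fun ω => (1 - g ω / M)^r * efun m ω) = 0 := by
      apply ih
      · refine lt_of_le_of_lt ?_ hm1
        have : (r:ℤ)*(d:ℤ) ≤ (r+1:ℕ)*(d:ℤ) := by
          push_cast
          nlinarith [Int.natCast_nonneg d]
        linarith
      · refine lt_of_le_of_lt ?_ hm2
        have : (r:ℤ)*(d:ℤ) ≤ (r+1:ℕ)*(d:ℤ) := by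
          push_cast
          nlinarith [Int.natCast_nonneg d]
        linarith
    rw [hz1]
    rw [Lf_sum N₁ N₂ S (fun h ω => ((η h : ℂ) / M) * ((1 - g ω / M)^r * efun (h + m) ω)) (fun h _ => continuous_const.mul ((hucont r).mul (efun_cont _)))]
    rw [Finset.sum_eq_zero, sub_zero]
    intro h hS
    rw [Lf_const_mul]
    rw [ih (h + m) ?_ ?_, mul_zero]
    · have hb := (hd h hS).1
      have habs : |(h+m).1| ≤ (d:ℤ) + |m.1| := by
        calc |(h+m).1| = |h.1 + m.1| := by rfl
        _ ≤ |h.1| + |m.1| := abs_add_le _ _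
        _ ≤ (d:ℤ) + |m.1| := by linarith
      have hm1' : |m.1| + (r+1:ℕ)*(d:ℤ) < N₁ := hm1
      push_cast at hm1' ⊢
      linarith
    · have hb := (hd h hS).2
      have habs : |(h+m).2| ≤ (d:ℤ) + |m.2| := by
        calc |(h+m).2| = |h.2 + m.2| := by rfl
        _ ≤ |h.2| + |m.2| := abs_add_le _ _
        _ ≤ (d:ℤ) + |m.2| := by linarith
      have hm2' : |m.2| + (r+1:ℕ)*(d:ℤ) < N₂ := hm2
      push_cast at hm2' ⊢
      linarith

lemma efun_def (k : ℤ × ℤ) (ω : ℝ × ℝ) : efun k ω =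
    Complex.exp (Complex.I * k.1 * (ω.1:ℂ)) * Complex.exp (Complex.I * k.2 * (ω.2:ℂ)) := rfl

lemma Lf_def (N₁ N₂ : ℕ) (φ : ℝ × ℝ → ℂ) : Lf N₁ N₂ φ =
    ((N₁:ℂ)*(N₂:ℂ))⁻¹ * (∑ j₁ ∈ Finset.range N₁, ∑ j₂ ∈ Finset.range N₂,
        φ (2*π*j₁/N₁, 2*π*j₂/N₂))
    - ((4:ℂ)*(π:ℂ)^2)⁻¹ * ∫ ω in Set.Icc (0:ℝ) (2*π) ×ˢ Set.Icc (0:ℝ) (2*π), φ ω := rfl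

theorem gmrf_covariance_fft_approximation_error
    (S : Finset (ℤ × ℤ)) (η : ℤ × ℤ → ℝ) (δ : ℝ) (hδ : 0 < δ)
    (g : ℝ × ℝ → ℂ)
    (hg : ∀ ω : ℝ × ℝ, g ω =
      ∑ h ∈ S, (η h : ℂ) * Complex.exp (Complex.I * ((h.1 : ℝ) * ω.1 + (h.2 : ℝ) * ω.2)))
    (hreal : ∀ ω : ℝ × ℝ, (g ω).im = 0)
    (hlb : ∀ ω : ℝ × ℝ, δ ≤ (g ω).re)
    (K : ℤ × ℤ → ℂ)
    (hK : ∀ h : ℤ × ℤ, K h =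
      ∫ ω in Set.Icc (0 : ℝ) (2 * π) ×ˢ Set.Icc (0 : ℝ) (2 * π),
        (g ω)⁻¹ * Complex.exp (Complex.I * (ω.1 * h.1 + ω.2 * h.2)))
    (Kapprox : ℤ × ℤ → ℕ → ℕ → ℕ → ℂ)
    (hKa : ∀ (h : ℤ × ℤ) (n₁ n₂ J : ℕ), Kapprox h n₁ n₂ J =
      (4 * (π : ℂ) ^ 2 / ((n₁ : ℂ) * (n₂ : ℂ) * (J : ℂ) ^ 2)) *
        ∑ j₁ ∈ Finset.range (n₁ * J), ∑ j₂ ∈ Finset.range (n₂ * J),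
          (g (2 * π * j₁ / (n₁ * J), 2 * π * j₂ / (n₂ * J)))⁻¹ *
            Complex.exp (Complex.I *
              (2 * π * j₁ * h.1 / (n₁ * J) + 2 * π * j₂ * h.2 / (n₂ * J)))) :
    ∀ p : ℕ, 1 ≤ p → ∃ C : ℝ, ∀ n₁ n₂ J : ℕ, 1 ≤ n₁ → n₁ ≤ n₂ → 2 ≤ J →
      ∀ h : ℤ × ℤ, |h.1| ≤ (n₁ : ℤ) → |h.2| ≤ (n₂ : ℤ) →
        ‖K h - Kapprox h n₁ n₂ J‖ ≤ C / ((n₁ : ℝ) * J) ^ p := by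
  intro p hp
  -- rewrite g in terms of efun
  have hg' : ∀ ω, g ω = ∑ h ∈ S, (η h : ℂ) * efun h ω := by
    intro ω
    rw [hg ω]
    refine Finset.sum_congr rfl fun h _ => ?_
    rw [efun_def, ← Complex.exp_add]
    congr 1
    push_cast
    ring
  have hgc : Continuous g := by
    rw [funext hg']
    exact continuous_finset_sum _ (fun h _ => (continuous_const.mul (efun_cont h)))
  set M₀ : ℝ := ∑ h ∈ S, |η h| with hM₀def
  have hgnorm : ∀ ω, ‖g ω‖ ≤ M₀ := by
    intro ω
    rw [hg' ω]
    apply (norm_sum_le _ _).trans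
    apply le_of_eq
    refine Finset.sum_congr rfl fun h _ => ?_
    rw [norm_mul, efun_norm, mul_one, Complex.norm_real, Real.norm_eq_abs]
  have hre_le : ∀ ω, (g ω).re ≤ ‖g ω‖ := fun ω => by
    exact Complex.re_le_norm (g ω)
  have hδM : δ ≤ M₀ := (hlb 0).trans ((hre_le 0).trans (hgnorm 0))
  have hM₀pos : 0 < M₀ := lt_of_lt_of_le hδ hδM
  have hMne : ((M₀:ℂ)) ≠ 0 := by exact_mod_cast hM₀pos.ne'
  have hgne : ∀ ω, g ω ≠ 0 := by
    intro ω h0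
    have := hlb ω
    rw [h0] at this
    simp at this
    linarith
  have hglb : ∀ ω, δ ≤ ‖g ω‖ := fun ω => (hlb ω).trans (hre_le ω)
  set θ : ℝ := 1 - δ/M₀ with hθdef
  have hθ0 : 0 ≤ θ := by
    have : δ/M₀ ≤ 1 := (div_le_one hM₀pos).mpr hδM
    simp only [hθdef]; linarith
  have hθ1 : θ < 1 := by
    have : 0 < δ/M₀ := div_pos hδ hM₀pos
    simp only [hθdef]; linarith
  have hu : ∀ ω, ‖1 - g ω / (M₀:ℂ)‖ ≤ θ := by
    intro ω
    have hgr : g ω = ((g ω).re : ℂ) := by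
      apply Complex.ext
      · rfl
      · simp [hreal ω]
    rw [hgr]
    have hcast : (1 : ℂ) - ((g ω).re : ℂ) / (M₀:ℂ) = ((1 - (g ω).re / M₀ : ℝ) : ℂ) := by
      push_cast; ring
    rw [hcast, Complex.norm_real, Real.norm_eq_abs, abs_of_nonneg]
    · have h1 : δ ≤ (g ω).re := hlb ω
      have h2 : δ/M₀ ≤ (g ω).re/M₀ := by
        exact (div_le_div_iff_of_pos_right hM₀pos).mpr h1
      simp only [hθdef]; linarith
    · have h3 : (g ω).re ≤ M₀ := (hre_le ω).trans (hgnorm ω)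
      have : (g ω).re/M₀ ≤ 1 := (div_le_one hM₀pos).mpr h3
      linarith
  -- degree bound for S
  set d : ℕ := (S.sup fun h : ℤ × ℤ => h.1.natAbs ⊔ h.2.natAbs) + 1 with hddef
  have hd1 : 1 ≤ d := Nat.le_add_left 1 _
  have hd : ∀ h ∈ S, |h.1| ≤ (d:ℤ) ∧ |h.2| ≤ (d:ℤ) := by
    intro h hS
    have h1 := Finset.le_sup (f := fun h : ℤ × ℤ => h.1.natAbs ⊔ h.2.natAbs) hS
    constructor
    · rw [Int.abs_eq_natAbs]
      exact_mod_cast (le_sup_left.trans h1).trans (Nat.le_succ _)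
    · rw [Int.abs_eq_natAbs]
      exact_mod_cast (le_sup_right.trans h1).trans (Nat.le_succ _)
  -- geometric rate
  set θ' : ℝ := max θ (1/2) with hθ'def
  have hθ'pos : 0 < θ' := lt_of_lt_of_le (by norm_num) (le_max_right _ _)
  have hθ'lt1 : θ' < 1 := max_lt hθ1 (by norm_num)
  have hθθ' : θ ≤ θ' := le_max_left _ _
  -- uniform bound on (q+1)^p θ'^q
  have hsumm : Summable (fun n : ℕ => (n:ℝ)^p * θ'^n) :=
    summable_pow_mul_geometric_of_norm_lt_one p
      (by rw [Real.norm_eq_abs, abs_of_pos hθ'pos]; exact hθ'lt1)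
  have htend0 := hsumm.tendsto_atTop_zero
  have htend1 : Filter.Tendsto (fun q : ℕ => ((q:ℝ)+1)^p * θ'^q) Filter.atTop (nhds 0) := by
    have hcomp := htend0.comp (Filter.tendsto_add_atTop_nat 1)
    have heq : (fun q : ℕ => ((q:ℝ)+1)^p * θ'^q) =
        fun q : ℕ => θ'⁻¹ * ((((q+1:ℕ)):ℝ)^p * θ'^(q+1)) := by
      funext q
      push_cast
      rw [pow_succ]
      field_simp
    rw [heq]
    simpa using (hcomp.const_mul θ'⁻¹)
  obtain ⟨C', hC'⟩ := htend1.bddAbove_range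
  have hC'' : ∀ q : ℕ, ((q:ℝ)+1)^p * θ'^q ≤ C' := fun q => hC' (Set.mem_range_self q)
  refine ⟨(8*π^2/δ) * (2*(d:ℝ))^p * C', ?_⟩
  intro n₁ n₂ J hn1 hn12 hJ h hh1 hh2
  have hN₁pos : 0 < n₁*J := Nat.mul_pos hn1 (by omega)
  have hN₂pos : 0 < n₂*J := Nat.mul_pos (le_trans hn1 hn12) (by omega)
  set R : ℕ := (n₁*J) / (2*d) with hRdef
  have h2d : 0 < 2*d := by omega
  have hRmul : R * (2*d) ≤ n₁*J := Nat.div_mul_le_self (n₁*J) (2*d)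
  have h2n₁ : 2*n₁ ≤ n₁*J := by nlinarith
  have h2n₂ : 2*n₂ ≤ n₂*J := by nlinarith
  have hN₁₂ : n₁*J ≤ n₂*J := Nat.mul_le_mul_right J hn12
  have hdeg1 : ∀ r < R, |h.1| + (r:ℤ)*(d:ℤ) < ((n₁*J:ℕ):ℤ) := by
    intro r hr
    have k1 : (r+1) * (2*d) ≤ n₁*J := le_trans (Nat.mul_le_mul_right _ hr) hRmul
    have k1' : ((r:ℤ)+1) * (2*(d:ℤ)) ≤ ((n₁*J:ℕ):ℤ) := by exact_mod_cast k1
    have h2n₁' : 2*(n₁:ℤ) ≤ ((n₁*J:ℕ):ℤ) := by exact_mod_cast h2n₁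
    have hd1' : (1:ℤ) ≤ (d:ℤ) := by exact_mod_cast hd1
    linarith [hh1]
  have hdeg2 : ∀ r < R, |h.2| + (r:ℤ)*(d:ℤ) < ((n₂*J:ℕ):ℤ) := by
    intro r hr
    have k1 : (r+1) * (2*d) ≤ n₁*J := le_trans (Nat.mul_le_mul_right _ hr) hRmul
    have k2 : (r+1) * (2*d) ≤ n₂*J := le_trans k1 hN₁₂
    have k2' : ((r:ℤ)+1) * (2*(d:ℤ)) ≤ ((n₂*J:ℕ):ℤ) := by exact_mod_cast k2
    have h2n₂' : 2*(n₂:ℤ) ≤ ((n₂*J:ℕ):ℤ) := by exact_mod_cast h2n₂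
    have hd1' : (1:ℤ) ≤ (d:ℤ) := by exact_mod_cast hd1
    linarith [hh2]
  -- function decomposition
  have hucont : ∀ r : ℕ, Continuous (fun ω => (1 - g ω / (M₀:ℂ))^r) := by
    intro r; fun_prop
  have decomp : ∀ ω : ℝ × ℝ, (g ω)⁻¹ * efun h ω =
      ((1 - g ω / (M₀:ℂ))^R / g ω) * efun h ω +
        ∑ r ∈ Finset.range R, ((M₀:ℂ))⁻¹ * ((1 - g ω / (M₀:ℂ))^r * efun h ω) := by
    intro ω
    have hu1 : (1 - g ω / (M₀:ℂ)) ≠ 1 := by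
      intro hcon
      have : g ω / (M₀:ℂ) = 0 := sub_eq_self.mp hcon
      rcases div_eq_zero_iff.mp this with h0 | h0
      · exact hgne ω h0
      · exact hMne h0
    have hsum : ∑ r ∈ Finset.range R, (1 - g ω / (M₀:ℂ))^r =
        ((1 - g ω / (M₀:ℂ))^R - 1) / ((1 - g ω / (M₀:ℂ)) - 1) := geom_sum_eq hu1 R
    have hfac : ∑ r ∈ Finset.range R, ((M₀:ℂ))⁻¹ * ((1 - g ω / (M₀:ℂ))^r * efun h ω) =
        (((M₀:ℂ))⁻¹ * ∑ r ∈ Finset.range R, (1 - g ω / (M₀:ℂ))^r) * efun h ω := by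
      rw [Finset.mul_sum, Finset.sum_mul]
      exact Finset.sum_congr rfl fun r _ => by ring
    rw [hfac, hsum]
    have hgω := hgne ω
    field_simp
    ring_nf; simp only [mul_inv_cancel_right₀ hgω]; ring
  have hremcont : Continuous (fun ω => ((1 - g ω / (M₀:ℂ))^R / g ω) * efun h ω) :=
    (((hucont R).div hgc hgne)).mul (efun_cont h)
  have hsumcont : Continuous (fun ω => ∑ r ∈ Finset.range R,
      ((M₀:ℂ))⁻¹ * ((1 - g ω / (M₀:ℂ))^r * efun h ω)) := by
    apply continuous_finset_sum
    intro r _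
    exact continuous_const.mul ((hucont r).mul (efun_cont h))
  have hLf_eq : Lf (n₁*J) (n₂*J) (fun ω => (g ω)⁻¹ * efun h ω) =
      Lf (n₁*J) (n₂*J) (fun ω => ((1 - g ω / (M₀:ℂ))^R / g ω) * efun h ω) := by
    rw [funext decomp, Lf_add (n₁*J) (n₂*J) _ _ hremcont hsumcont]
    rw [Lf_sum (n₁*J) (n₂*J) (Finset.range R) (fun r ω => ((M₀:ℂ))⁻¹ * ((1 - g ω / (M₀:ℂ))^r * efun h ω))
      (fun r _ => continuous_const.mul ((hucont r).mul (efun_cont h)))]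
    rw [Finset.sum_eq_zero, add_zero]
    intro r hr
    rw [Lf_const_mul]
    rw [vanish S η g hg' (M₀:ℂ) hMne d hd (n₁*J) (n₂*J) hN₁pos hN₂pos r h
      (hdeg1 r (Finset.mem_range.mp hr)) (hdeg2 r (Finset.mem_range.mp hr)), mul_zero]
  -- identify K and Kapprox with Lf
  have h4π : ((4:ℂ)*(π:ℂ)^2) ≠ 0 := by
    have hπ : (π:ℂ) ≠ 0 := by exact_mod_cast Real.pi_ne_zero
    exact mul_ne_zero (by norm_num) (pow_ne_zero 2 hπ)
  have hKeq : K h = (4*(π:ℂ)^2) * (((4:ℂ)*(π:ℂ)^2)⁻¹ *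
      ∫ ω in Set.Icc (0:ℝ) (2*π) ×ˢ Set.Icc (0:ℝ) (2*π), (g ω)⁻¹ * efun h ω) := by
    rw [hK h, ← mul_assoc, mul_inv_cancel₀ h4π, one_mul]
    apply MeasureTheory.setIntegral_congr_fun (measurableSet_Icc.prod measurableSet_Icc)
    intro ω _
    dsimp only
    congr 1
    rw [efun_def, ← Complex.exp_add]
    congr 1
    push_cast
    ring
  have hn₁C : (n₁:ℂ) ≠ 0 := by exact_mod_cast (by omega : n₁ ≠ 0)
  have hn₂C : (n₂:ℂ) ≠ 0 := by exact_mod_cast (by omega : n₂ ≠ 0)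
  have hJC : (J:ℂ) ≠ 0 := by exact_mod_cast (by omega : J ≠ 0)
  have hKapprox_eq : Kapprox h n₁ n₂ J = (4*(π:ℂ)^2) * ((((n₁*J:ℕ):ℂ)*((n₂*J:ℕ):ℂ))⁻¹ *
      ∑ j₁ ∈ Finset.range (n₁*J), ∑ j₂ ∈ Finset.range (n₂*J),
        (fun ω : ℝ × ℝ => (g ω)⁻¹ * efun h ω)
          (2*π*j₁/((n₁*J:ℕ):ℝ), 2*π*j₂/((n₂*J:ℕ):ℝ))) := by
    rw [hKa]
    have hsums : (∑ j₁ ∈ Finset.range (n₁ * J), ∑ j₂ ∈ Finset.range (n₂ * J),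
        (g (2 * π * j₁ / (n₁ * J), 2 * π * j₂ / (n₂ * J)))⁻¹ *
          Complex.exp (Complex.I *
            (2 * π * j₁ * h.1 / (n₁ * J) + 2 * π * j₂ * h.2 / (n₂ * J)))) =
        ∑ j₁ ∈ Finset.range (n₁*J), ∑ j₂ ∈ Finset.range (n₂*J),
          (fun ω : ℝ × ℝ => (g ω)⁻¹ * efun h ω)
            (2*π*j₁/((n₁*J:ℕ):ℝ), 2*π*j₂/((n₂*J:ℕ):ℝ)) := by
      refine Finset.sum_congr rfl fun j₁ _ => Finset.sum_congr rfl fun j₂ _ => ?_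
      have e1 : (2*π*(j₁:ℝ)/((n₁:ℝ)*(J:ℝ))) = 2*π*(j₁:ℝ)/(((n₁*J:ℕ)):ℝ) := by
        push_cast; ring
      have e2 : (2*π*(j₂:ℝ)/((n₂:ℝ)*(J:ℝ))) = 2*π*(j₂:ℝ)/(((n₂*J:ℕ)):ℝ) := by
        push_cast; ring
      rw [e1, e2]
      dsimp only
      congr 1
      rw [efun_def, ← Complex.exp_add]
      congr 1
      push_cast
      field_simp
    rw [hsums]
    have hpref : 4*(π:ℂ)^2/((n₁:ℂ)*(n₂:ℂ)*(J:ℂ)^2) =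
        (4*(π:ℂ)^2) * ((((n₁*J:ℕ):ℂ)*((n₂*J:ℕ):ℂ))⁻¹) := by
      push_cast
      field_simp
    rw [hpref, mul_assoc]
  have hdiff : K h - Kapprox h n₁ n₂ J =
      -(4*(π:ℂ)^2) * Lf (n₁*J) (n₂*J) (fun ω => (g ω)⁻¹ * efun h ω) := by
    rw [hKeq, hKapprox_eq, Lf_def]
    push_cast
    ring
  -- norm bound
  have hbound : ∀ ω : ℝ × ℝ, ‖((1 - g ω / (M₀:ℂ))^R / g ω) * efun h ω‖ ≤ θ'^R / δ := by
    intro ω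
    rw [norm_mul, efun_norm, mul_one, norm_div, norm_pow]
    apply div_le_div₀ (by positivity) _ hδ (hglb ω)
    exact pow_le_pow_left₀ (norm_nonneg _) ((hu ω).trans hθθ') R
  have hnorm4 : ‖(4*(π:ℂ)^2)‖ = 4*π^2 := by
    have : (4*(π:ℂ)^2) = ((4*π^2:ℝ):ℂ) := by push_cast; ring
    rw [this, Complex.norm_real, Real.norm_eq_abs, abs_of_pos (by positivity)]
  have hmain : ‖K h - Kapprox h n₁ n₂ J‖ ≤ (4*π^2) * (2 * (θ'^R / δ)) := by
    rw [hdiff, hLf_eq, norm_mul, norm_neg, hnorm4]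
    apply mul_le_mul_of_nonneg_left _ (by positivity)
    exact Lf_norm_le (n₁*J) (n₂*J) hN₁pos hN₂pos _ _ hbound
  -- final arithmetic
  have hNR : ((n₁:ℝ)*(J:ℝ)) = ((n₁*J:ℕ):ℝ) := by push_cast; ring
  rw [hNR]
  have hN₁R : (0:ℝ) < ((n₁*J:ℕ):ℝ)^p := by
    have : (0:ℝ) < ((n₁*J:ℕ):ℝ) := by exact_mod_cast hN₁pos
    positivity
  apply hmain.trans
  rw [le_div_iff₀ hN₁R]
  have hmlt : n₁*J < (R+1)*(2*d) := by
    have h' : (n₁*J)/(2*d) < R + 1 := by rw [← hRdef]; exact Nat.lt_succ_self R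
    exact (Nat.div_lt_iff_lt_mul h2d).mp h'
  have hNle : ((n₁*J:ℕ):ℝ) ≤ ((R:ℝ)+1)*(2*(d:ℝ)) := by
    exact_mod_cast le_of_lt hmlt
  have hkey : θ'^R * ((n₁*J:ℕ):ℝ)^p ≤ (2*(d:ℝ))^p * C' := by
    have h1 : ((n₁*J:ℕ):ℝ)^p ≤ (((R:ℝ)+1)*(2*(d:ℝ)))^p :=
      pow_le_pow_left₀ (by positivity) hNle p
    have h2 : (((R:ℝ)+1)*(2*(d:ℝ)))^p = ((R:ℝ)+1)^p * (2*(d:ℝ))^p := mul_pow _ _ _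
    calc θ'^R * ((n₁*J:ℕ):ℝ)^p ≤ θ'^R * (((R:ℝ)+1)^p * (2*(d:ℝ))^p) := by
          rw [← h2]
          exact mul_le_mul_of_nonneg_left h1 (by positivity)
      _ = (2*(d:ℝ))^p * (((R:ℝ)+1)^p * θ'^R) := by ring
      _ ≤ (2*(d:ℝ))^p * C' :=
          mul_le_mul_of_nonneg_left (hC'' R) (by positivity)
  calc (4*π^2) * (2 * (θ'^R / δ)) * ((n₁*J:ℕ):ℝ)^p
      = (8*π^2/δ) * (θ'^R * ((n₁*J:ℕ):ℝ)^p) := by ring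
    _ ≤ (8*π^2/δ) * ((2*(d:ℝ))^p * C') :=
        mul_le_mul_of_nonneg_left hkey (by positivity)
    _ = (8*π^2/δ) * (2*(d:ℝ))^p * C' := by ring
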